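/- arXiv:1501.03932 — 2 statements merged into one kernel-verified Lean document; each statement's English description precedes it below -/
import Mathlib

section
/- Let 𝒜 be a 3-dimensional non-unimodular Lie algebra over K. Then its unimodular ideal I_0 = {a ∈ 𝒜 : tr(ad_a) = 0} is a 2-dimensional abelian ideal, and for any u, v ∉ I_0 there exists a nonzero scalar s with ad_v|_{I_0} = s · ad_u|_{I_0}. Moreover, 𝒜* carries a generic non-flat linear Poisson pair if and only if the endomorphism ad_u|_{I_0} (u ∉ I_0) is not a scalar multiple of the identity; concretely, choosing a basis {e_1,e_2,e_3} with I_0 = span{e_2,e_3}, [e_1,e_2] = a_{22}e_2 + a_{23}e_3, [e_1,e_3] = a_{32}e_2 + a_{33}e_3, the constant compatible Poisson structure Λ_1 = ∂/∂x_1 ∧ (b_2 ∂/∂x_2 + b_3 ∂/∂x_3) gives a flat pair exactly when a_{32}b_2² + (a_{33}-a_{22})b_2 b_3 - a_{23}b_3² = 0. -/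
open Matrix

variable {K : Type*} [RCLike K]

/-- Partial derivative in the `i`-th coordinate direction on `K³`. -/
noncomputable def pd3 (i : Fin 3) (f : (Fin 3 → K) → K) (x : Fin 3 → K) : K :=
  fderiv K f x (Pi.single i 1)

/-- The curl of a 1-form `Σ wᵢ dxᵢ` on `K³`: the vector representing its exterior
derivative. -/
noncomputable def curl3 (w : (Fin 3 → K) → (Fin 3 → K)) (x : Fin 3 → K) : Fin 3 → K :=
  ![pd3 1 (fun y => w y 2) x - pd3 2 (fun y => w y 1) x,
    pd3 2 (fun y => w y 0) x - pd3 0 (fun y => w y 2) x,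
    pd3 0 (fun y => w y 1) x - pd3 1 (fun y => w y 0) x]

/-- The set of generic points of the pair of bivector fields on `K³` represented by the
1-form coefficient vectors `w, w₁` (single Kronecker block pointwise). -/
def genSet (w w1 : (Fin 3 → K) → (Fin 3 → K)) : Set (Fin 3 → K) :=
  {x | ∀ s t : K, ¬(s = 0 ∧ t = 0) → s • w x + t • w1 x ≠ 0}

/-- Flatness of the Poisson pair represented by `(ω, ω₁, Ω)` (coefficient vectors
`w, w₁`) at a point, via the characterization of Proposition 2: near the point there is
a 1-form `λ` with `dω = λ∧ω`, `dω₁ = λ∧ω₁` and `dλ = 0`. -/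
noncomputable def flatAt (w w1 : (Fin 3 → K) → (Fin 3 → K)) (p : Fin 3 → K) : Prop :=
  ∃ U : Set (Fin 3 → K), IsOpen U ∧ p ∈ U ∧
    ∃ lam : (Fin 3 → K) → (Fin 3 → K), DifferentiableOn K lam U ∧
      ∀ x ∈ U, curl3 w x = crossProduct (lam x) (w x)
        ∧ curl3 w1 x = crossProduct (lam x) (w1 x)
        ∧ curl3 lam x = 0

lemma hasFDerivAt_lin3 (α β : K) (x : Fin 3 → K) :
    HasFDerivAt (fun y : Fin 3 → K => α * y 1 + β * y 2)
      (α • (ContinuousLinearMap.proj 1 : (Fin 3 → K) →L[K] K)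
        + β • (ContinuousLinearMap.proj 2 : (Fin 3 → K) →L[K] K)) x := by
  exact (((ContinuousLinearMap.proj 1 : (Fin 3 → K) →L[K] K).hasFDerivAt.const_mul α).add
    (((ContinuousLinearMap.proj 2 : (Fin 3 → K) →L[K] K)).hasFDerivAt.const_mul β))

lemma pd3_lin3 (α β : K) (i : Fin 3) (x : Fin 3 → K) :
    pd3 i (fun y : Fin 3 → K => α * y 1 + β * y 2) x
      = α * (Pi.single i 1 : Fin 3 → K) 1 + β * (Pi.single i 1 : Fin 3 → K) 2 := by
  rw [pd3, (hasFDerivAt_lin3 α β x).fderiv]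
  simp [ContinuousLinearMap.proj_apply]

lemma pd3_const (c : K) (i : Fin 3) (x : Fin 3 → K) :
    pd3 i (fun _ : Fin 3 → K => c) x = 0 := by
  rw [pd3, fderiv_fun_const]; simp

lemma pd3_div3 (c α β : K) (i : Fin 3) (x : Fin 3 → K) (h : α * x 1 + β * x 2 ≠ 0) :
    pd3 i (fun y : Fin 3 → K => c / (α * y 1 + β * y 2)) x
      = -(c * (α * (Pi.single i 1 : Fin 3 → K) 1 + β * (Pi.single i 1 : Fin 3 → K) 2))
        / (α * x 1 + β * x 2) ^ 2 := by
  have h1 : HasFDerivAt (fun y : Fin 3 → K => c * (α * y 1 + β * y 2)⁻¹)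
      (c • ((ContinuousLinearMap.smulRight (1 : K →L[K] K)
          (-((α * x 1 + β * x 2) ^ 2)⁻¹)).comp
        (α • (ContinuousLinearMap.proj 1 : (Fin 3 → K) →L[K] K)
          + β • (ContinuousLinearMap.proj 2 : (Fin 3 → K) →L[K] K)))) x :=
    ((hasFDerivAt_inv h).comp x (hasFDerivAt_lin3 α β x)).const_mul c
  have he : (fun y : Fin 3 → K => c / (α * y 1 + β * y 2))
      = fun y : Fin 3 → K => c * (α * y 1 + β * y 2)⁻¹ := by
    funext y; rw [div_eq_mul_inv]
  rw [pd3, he, h1.fderiv]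
  simp only [ContinuousLinearMap.smul_apply, ContinuousLinearMap.comp_apply,
    ContinuousLinearMap.add_apply, ContinuousLinearMap.smulRight_apply,
    ContinuousLinearMap.one_apply, ContinuousLinearMap.proj_apply, smul_eq_mul]
  field_simp

lemma gen_iff (a22 a23 a32 a33 b2 b3 : K)
    (w w1 : (Fin 3 → K) → Fin 3 → K)
    (hw : ∀ x, w x = ![0, -(a32 * x 1 + a33 * x 2), a22 * x 1 + a23 * x 2])
    (hw1 : ∀ x, w1 x = ![0, -b3, b2]) (x : Fin 3 → K) :
    x ∈ genSet w w1 ↔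
      (b2 * a32 - b3 * a22) * x 1 + (b2 * a33 - b3 * a23) * x 2 ≠ 0 := by
  constructor
  · intro hg h0
    by_cases h1 : b3 = 0 ∧ a32 * x 1 + a33 * x 2 = 0
    · by_cases h2 : b2 = 0 ∧ a22 * x 1 + a23 * x 2 = 0
      · refine hg 1 0 (by simp) ?_
        funext j
        fin_cases j
        · simp [hw, hw1]
        · simp [hw, hw1]; linear_combination -h1.2
        · simp [hw, hw1]; linear_combination h2.2
      · refine hg b2 (-(a22 * x 1 + a23 * x 2)) ?_ ?_
        · rintro ⟨u, v⟩; exact h2 ⟨u, neg_eq_zero.mp v⟩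
        · funext j
          fin_cases j
          · simp [hw, hw1]
          · simp [hw, hw1]; linear_combination (-b2) * h1.2 + (a22 * x 1 + a23 * x 2) * h1.1
          · simp [hw, hw1]; ring
    · refine hg b3 (-(a32 * x 1 + a33 * x 2)) ?_ ?_
      · rintro ⟨u, v⟩; exact h1 ⟨u, neg_eq_zero.mp v⟩
      · funext j
        fin_cases j
        · simp [hw, hw1]
        · simp [hw, hw1]; ring
        · simp [hw, hw1]; linear_combination -h0
  · intro hD s t hst heq
    have e1 := congrFun heq 1
    have e2 := congrFun heq 2
    simp [hw, hw1] at e1 e2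
    have hs : s = 0 := by
      have hsD : s * ((b2 * a32 - b3 * a22) * x 1 + (b2 * a33 - b3 * a23) * x 2) = 0 := by
        linear_combination (-b2) * e1 + (-b3) * e2
      rcases mul_eq_zero.1 hsD with h | h
      · exact h
      · exact absurd h hD
    subst hs
    simp at e1 e2
    rcases e1 with h | h
    · exact hst ⟨rfl, h⟩
    · rcases e2 with h' | h'
      · exact hst ⟨rfl, h'⟩
      · exact hD (by subst h h'; ring)

lemma curl3_w (a22 a23 a32 a33 : K)
    (w : (Fin 3 → K) → Fin 3 → K)
    (hw : ∀ x, w x = ![0, -(a32 * x 1 + a33 * x 2), a22 * x 1 + a23 * x 2])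
    (x : Fin 3 → K) : curl3 w x = ![a22 + a33, 0, 0] := by
  have hw0 : (fun y : Fin 3 → K => w y 0) = fun _ => (0 : K) := by
    funext y; simp [hw]
  have hwc1 : (fun y : Fin 3 → K => w y 1)
      = fun y : Fin 3 → K => (-a32) * y 1 + (-a33) * y 2 := by
    funext y; simp [hw]; ring
  have hwc2 : (fun y : Fin 3 → K => w y 2)
      = fun y : Fin 3 → K => a22 * y 1 + a23 * y 2 := by
    funext y; simp [hw]
  rw [curl3, hw0, hwc1, hwc2, pd3_lin3, pd3_lin3, pd3_lin3, pd3_lin3,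
    pd3_const, pd3_const]
  funext j
  fin_cases j <;> simp [Pi.single_apply]

lemma curl3_w1 (b2 b3 : K)
    (w1 : (Fin 3 → K) → Fin 3 → K)
    (hw1 : ∀ x, w1 x = ![0, -b3, b2])
    (x : Fin 3 → K) : curl3 w1 x = ![0, 0, 0] := by
  have h0 : (fun y : Fin 3 → K => w1 y 0) = fun _ => (0 : K) := by
    funext y; simp [hw1]
  have h1 : (fun y : Fin 3 → K => w1 y 1) = fun _ => (-b3 : K) := by
    funext y; simp [hw1]
  have h2 : (fun y : Fin 3 → K => w1 y 2) = fun _ => (b2 : K) := by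
    funext y; simp [hw1]
  rw [curl3, h0, h1, h2]
  funext j
  fin_cases j <;> simp [pd3_const]

lemma flat_of_Q (a22 a23 a32 a33 b2 b3 : K)
    (w w1 : (Fin 3 → K) → Fin 3 → K)
    (hw : ∀ x, w x = ![0, -(a32 * x 1 + a33 * x 2), a22 * x 1 + a23 * x 2])
    (hw1 : ∀ x, w1 x = ![0, -b3, b2])
    (hQ : a32 * b2 ^ 2 + (a33 - a22) * b2 * b3 - a23 * b3 ^ 2 = 0)
    (p : Fin 3 → K)
    (hp : (b2 * a32 - b3 * a22) * p 1 + (b2 * a33 - b3 * a23) * p 2 ≠ 0) :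
    flatAt w w1 p := by
  set α : K := b2 * a32 - b3 * a22 with hα
  set β : K := b2 * a33 - b3 * a23 with hβ
  set T : K := a22 + a33 with hT
  have hQ' : b2 * α + b3 * β = 0 := by
    rw [hα, hβ]; linear_combination hQ
  have hcont : Continuous (fun y : Fin 3 → K => α * y 1 + β * y 2) :=
    ((continuous_const.mul (continuous_apply 1)).add
      (continuous_const.mul (continuous_apply 2)))
  refine ⟨{y | α * y 1 + β * y 2 ≠ 0}, isOpen_ne.preimage hcont, hp, ?_⟩
  refine ⟨fun y i => (![0, -(T * b3), T * b2] : Fin 3 → K) i / (α * y 1 + β * y 2),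
    ?_, ?_⟩
  · rw [differentiableOn_pi]
    intro i
    have hd : DifferentiableOn K (fun y : Fin 3 → K => α * y 1 + β * y 2)
        {y | α * y 1 + β * y 2 ≠ 0} :=
      fun y _ => ((hasFDerivAt_lin3 α β y).differentiableAt).differentiableWithinAt
    have hre : (fun x : Fin 3 → K =>
        (![0, -(T * b3), T * b2] : Fin 3 → K) i / (α * x 1 + β * x 2))
        = fun x : Fin 3 → K =>
          (![0, -(T * b3), T * b2] : Fin 3 → K) i * (α * x 1 + β * x 2)⁻¹ := by
      funext y; rw [div_eq_mul_inv]
    rw [hre]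
    exact (hd.inv (fun y hy => hy)).const_mul _
  · intro x hx
    have hx' : α * x 1 + β * x 2 ≠ 0 := hx
    have hl0 : (fun y : Fin 3 → K =>
        (![0, -(T * b3), T * b2] : Fin 3 → K) 0 / (α * y 1 + β * y 2))
        = fun _ : Fin 3 → K => (0 : K) := by
      funext y; simp
    have hl1 : (fun y : Fin 3 → K =>
        (![0, -(T * b3), T * b2] : Fin 3 → K) 1 / (α * y 1 + β * y 2))
        = fun y : Fin 3 → K => (-(T * b3)) / (α * y 1 + β * y 2) := by
      funext y; simp
    have hl2 : (fun y : Fin 3 → K =>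
        (![0, -(T * b3), T * b2] : Fin 3 → K) 2 / (α * y 1 + β * y 2))
        = fun y : Fin 3 → K => (T * b2) / (α * y 1 + β * y 2) := by
      funext y; simp
    have d1 : pd3 1 (fun y : Fin 3 → K => (T * b2) / (α * y 1 + β * y 2)) x
        = -(T * b2 * α) / (α * x 1 + β * x 2) ^ 2 := by
      rw [pd3_div3 _ _ _ _ _ hx']; simp [Pi.single_apply]
    have d2 : pd3 2 (fun y : Fin 3 → K => (-(T * b3)) / (α * y 1 + β * y 2)) x
        = -(-(T * b3) * β) / (α * x 1 + β * x 2) ^ 2 := by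
      rw [pd3_div3 _ _ _ _ _ hx']; simp [Pi.single_apply]
    have d3 : pd3 0 (fun y : Fin 3 → K => (T * b2) / (α * y 1 + β * y 2)) x = 0 := by
      rw [pd3_div3 _ _ _ _ _ hx']; simp [Pi.single_apply]
    have d4 : pd3 0 (fun y : Fin 3 → K => (-(T * b3)) / (α * y 1 + β * y 2)) x = 0 := by
      rw [pd3_div3 _ _ _ _ _ hx']; simp [Pi.single_apply]
    refine ⟨?_, ?_, ?_⟩
    · rw [curl3_w a22 a23 a32 a33 w hw x, cross_apply]
      funext j
      fin_cases j
      · simp [hw, hw1]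
        field_simp
        ring
      · simp [hw, hw1]
      · simp [hw, hw1]
    · rw [curl3_w1 b2 b3 w1 hw1 x, cross_apply]
      funext j
      fin_cases j
      · simp [hw, hw1]
        field_simp
        ring
      · simp [hw, hw1]
      · simp [hw, hw1]
    · rw [curl3, hl0, hl1, hl2, d1, d2, d3, d4, pd3_const, pd3_const,
        div_sub_div_same]
      have hnum : -(T * b2 * α) - -(-(T * b3) * β) = 0 := by
        linear_combination (-T) * hQ'
      rw [hnum, zero_div]
      funext j
      fin_cases j <;> simp

lemma Q_of_flat (a22 a23 a32 a33 b2 b3 : K)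
    (w w1 : (Fin 3 → K) → Fin 3 → K)
    (hw : ∀ x, w x = ![0, -(a32 * x 1 + a33 * x 2), a22 * x 1 + a23 * x 2])
    (hw1 : ∀ x, w1 x = ![0, -b3, b2])
    (hT : a22 + a33 ≠ 0)
    (p : Fin 3 → K)
    (hp : (b2 * a32 - b3 * a22) * p 1 + (b2 * a33 - b3 * a23) * p 2 ≠ 0)
    (hf : flatAt w w1 p) :
    a32 * b2 ^ 2 + (a33 - a22) * b2 * b3 - a23 * b3 ^ 2 = 0 := by
  set α : K := b2 * a32 - b3 * a22 with hα
  set β : K := b2 * a33 - b3 * a23 with hβ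
  set T : K := a22 + a33 with hTdef
  obtain ⟨U, hU, hpU, lam, hdiff, hcond⟩ := hf
  have hcont : Continuous (fun y : Fin 3 → K => α * y 1 + β * y 2) :=
    ((continuous_const.mul (continuous_apply 1)).add
      (continuous_const.mul (continuous_apply 2)))
  set V : Set (Fin 3 → K) := U ∩ {y | α * y 1 + β * y 2 ≠ 0} with hV
  have hVopen : IsOpen V := hU.inter (isOpen_ne.preimage hcont)
  have hpV : p ∈ V := ⟨hpU, hp⟩
  have hkey : ∀ x ∈ V, lam x 1 = (-(T * b3)) / (α * x 1 + β * x 2)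
      ∧ lam x 2 = (T * b2) / (α * x 1 + β * x 2) := by
    intro x hx
    obtain ⟨h1, h2, h3⟩ := hcond x hx.1
    have hxΔ : α * x 1 + β * x 2 ≠ 0 := hx.2
    rw [curl3_w a22 a23 a32 a33 w hw x, cross_apply] at h1
    rw [curl3_w1 b2 b3 w1 hw1 x, cross_apply] at h2
    have eqA := congrFun h2 0
    have eqB := congrFun h1 0
    simp [hw, hw1] at eqA eqB
    constructor
    · rw [eq_div_iff hxΔ]
      linear_combination (-(a32 * x 1 + a33 * x 2)) * eqA
        + b3 * eqB
    · rw [eq_div_iff hxΔ]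
      linear_combination (a22 * x 1 + a23 * x 2) * eqA
        - b2 * eqB
  have hev1 : (fun y => lam y 1) =ᶠ[nhds p]
      (fun y : Fin 3 → K => (-(T * b3)) / (α * y 1 + β * y 2)) :=
    Filter.eventuallyEq_of_mem (hVopen.mem_nhds hpV) (fun x hx => (hkey x hx).1)
  have hev2 : (fun y => lam y 2) =ᶠ[nhds p]
      (fun y : Fin 3 → K => (T * b2) / (α * y 1 + β * y 2)) :=
    Filter.eventuallyEq_of_mem (hVopen.mem_nhds hpV) (fun x hx => (hkey x hx).2)
  have hc := congrFun (hcond p hpU).2.2 0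
  simp only [curl3, Matrix.cons_val_zero, Pi.zero_apply] at hc
  have hd1 : pd3 1 (fun y => lam y 2) p = -(T * b2 * α) / (α * p 1 + β * p 2) ^ 2 := by
    rw [pd3, hev2.fderiv_eq, ← pd3, pd3_div3 _ _ _ _ _ hp]
    simp [Pi.single_apply]
  have hd2 : pd3 2 (fun y => lam y 1) p = -(-(T * b3) * β) / (α * p 1 + β * p 2) ^ 2 := by
    rw [pd3, hev1.fderiv_eq, ← pd3, pd3_div3 _ _ _ _ _ hp]
    simp [Pi.single_apply]
  rw [hd1, hd2, div_sub_div_same, div_eq_zero_iff] at hc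
  rcases hc with hc | hc
  · have hQ' : b2 * α + b3 * β = 0 := by
      rcases mul_eq_zero.1 (show T * (b2 * α + b3 * β) = 0 by linear_combination -hc)
        with h | h
      · exact absurd h hT
      · exact h
    rw [hα, hβ] at hQ'
    linear_combination hQ'
  · exact absurd hc (pow_ne_zero 2 hp)

lemma exists_pt (α β : K) (h : ¬(α = 0 ∧ β = 0)) :
    ∃ x : Fin 3 → K, α * x 1 + β * x 2 ≠ 0 := by
  by_cases hα : α = 0
  · refine ⟨![0, 0, 1], ?_⟩
    simp [hα]
    tauto
  · refine ⟨![0, 1, 0], ?_⟩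
    simp [hα]

/-- let `𝒜` be a 3-dimensional non-unimodular Lie algebra and
`I₀ = {a | tr(ad a) = 0}` its unimodular ideal. Then `I₀` is a 2-dimensional abelian
ideal; for `u, v ∉ I₀` the restrictions `ad v|_{I₀}` and `ad u|_{I₀}` are proportional by
a nonzero scalar. Moreover, choosing a basis `{e₁,e₂,e₃}` with `I₀ = span{e₂,e₃}`,
`[e₁,e₂] = a₂₂e₂ + a₂₃e₃`, `[e₁,e₃] = a₃₂e₂ + a₃₃e₃`, and identifying `𝒜*` with `K³`
(so that the Lie–Poisson structure `Λ` is represented by the 1-form with coefficient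
vector `w(x) = (0, -(a₃₂x₂+a₃₃x₃), a₂₂x₂+a₂₃x₃))` and the constant compatible structure
`Λ₁ = ∂₁∧(b₂∂₂+b₃∂₃)` by `w₁ = (0,-b₃,b₂)`): `𝒜*` carries a generic non-flat linear
Poisson pair iff `ad e₁|_{I₀}` is not a scalar multiple of the identity, and for given
`(b₂,b₃)` the pair is flat exactly when `a₃₂b₂² + (a₃₃-a₂₂)b₂b₃ - a₂₃b₃² = 0`. -/
theorem stmt_18 {L : Type*} [LieRing L] [LieAlgebra K L] [FiniteDimensional K L]
    (hdim : Module.finrank K L = 3)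
    (hnu : ∃ u : L, LinearMap.trace K L ((LieAlgebra.ad K L u : L →ₗ[K] L)) ≠ 0)
    (I0 : Submodule K L)
    (hI0 : I0 = LinearMap.ker ((LinearMap.trace K L).comp
      (LieAlgebra.ad K L : L →ₗ[K] Module.End K L)))
    (e : Module.Basis (Fin 3) K L) (a22 a23 a32 a33 : K)
    (hspan : I0 = Submodule.span K ({e 1, e 2} : Set L))
    (hb1 : ⁅e 0, e 1⁆ = a22 • e 1 + a23 • e 2)
    (hb2 : ⁅e 0, e 2⁆ = a32 • e 1 + a33 • e 2)
    (w : (Fin 3 → K) → (Fin 3 → K))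
    (hw : ∀ x, w x = ![0, -(a32 * x 1 + a33 * x 2), a22 * x 1 + a23 * x 2])
    (w1 : K → K → (Fin 3 → K) → (Fin 3 → K))
    (hw1 : ∀ b2 b3 x, w1 b2 b3 x = ![0, -b3, b2]) :
    (∀ y : L, ∀ x ∈ I0, ⁅y, x⁆ ∈ I0)
    ∧ Module.finrank K I0 = 2
    ∧ (∀ x ∈ I0, ∀ y ∈ I0, ⁅x, y⁆ = (0 : L))
    ∧ (∀ u v : L, u ∉ I0 → v ∉ I0 →
        ∃ s : K, s ≠ 0 ∧ ∀ x ∈ I0, ⁅v, x⁆ = s • ⁅u, x⁆)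
    ∧ ((∃ b2 b3 : K, (genSet w (w1 b2 b3)).Nonempty
          ∧ ∃ p ∈ genSet w (w1 b2 b3), ¬ flatAt w (w1 b2 b3) p)
        ↔ ¬ (a23 = 0 ∧ a32 = 0 ∧ a22 = a33))
    ∧ (∀ b2 b3 : K, (∀ p ∈ genSet w (w1 b2 b3), flatAt w (w1 b2 b3) p)
        ↔ a32 * b2 ^ 2 + (a33 - a22) * b2 * b3 - a23 * b3 ^ 2 = 0) := by
  set f : L →ₗ[K] K := (LinearMap.trace K L).comp
      (LieAlgebra.ad K L : L →ₗ[K] Module.End K L) with hf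
  have hfapp : ∀ z : L, f z = LinearMap.trace K L (LieAlgebra.ad K L z) := by
    intro z; simp [hf]
  -- traces of brackets vanish
  have trace_lie : ∀ y x : L, f ⁅y, x⁆ = 0 := by
    intro y x
    letI : LieRing (Module.End K L) := LieRing.ofAssociativeRing
    letI : LieAlgebra K (Module.End K L) := LieAlgebra.ofAssociativeAlgebra
    rw [hfapp, LieHom.map_lie, Ring.lie_def, map_sub, LinearMap.trace_mul_comm, sub_self]
  -- the ideal property
  have hideal : ∀ y : L, ∀ x ∈ I0, ⁅y, x⁆ ∈ I0 := by
    intro y x _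
    rw [hI0, LinearMap.mem_ker]
    exact trace_lie y x
  -- trace formula in the basis
  have trace_ad : ∀ z : L, f z = ∑ i : Fin 3, e.repr ⁅z, e i⁆ i := by
    intro z
    rw [hfapp, LinearMap.trace_eq_matrix_trace K e, Matrix.trace]
    simp [Matrix.diag, LinearMap.toMatrix_apply, LieAlgebra.ad_apply]
  have hfe1 : f (e 1) = 0 := by
    have : e 1 ∈ I0 := by
      rw [hspan]; exact Submodule.subset_span (by simp)
    rw [hI0, LinearMap.mem_ker] at this
    exact this
  have hfe2 : f (e 2) = 0 := by
    have : e 2 ∈ I0 := by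
      rw [hspan]; exact Submodule.subset_span (by simp)
    rw [hI0, LinearMap.mem_ker] at this
    exact this
  -- bracket of e1 e2 vanishes
  have hbr : ⁅e 1, e 2⁆ = (0 : L) := by
    have hmem : ⁅e 1, e 2⁆ ∈ Submodule.span K ({e 1, e 2} : Set L) := by
      rw [← hspan, hI0, LinearMap.mem_ker]; exact trace_lie _ _
    obtain ⟨a, b, hab⟩ := Submodule.mem_span_pair.1 hmem
    have h10 : ⁅e 1, e 0⁆ = -(a22 • e 1 + a23 • e 2) := by rw [← hb1, lie_skew]
    have h20 : ⁅e 2, e 0⁆ = -(a32 • e 1 + a33 • e 2) := by rw [← hb2, lie_skew]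
    have h21 : ⁅e 2, e 1⁆ = -(a • e 1 + b • e 2) := by
      rw [hab, lie_skew]
    have hb0 : b = 0 := by
      have := hfe1
      rw [trace_ad, Fin.sum_univ_three, h10, lie_self, ← hab] at this
      simpa [Finsupp.single_apply] using this
    have ha0 : a = 0 := by
      have := hfe2
      rw [trace_ad, Fin.sum_univ_three, h20, h21, lie_self] at this
      simpa [Finsupp.single_apply] using this
    rw [← hab, ha0, hb0]; simp
  -- abelian
  have habel : ∀ x ∈ I0, ∀ y ∈ I0, ⁅x, y⁆ = (0 : L) := by
    intro x hx y hy
    rw [hspan] at hx hy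
    obtain ⟨px, qx, hx⟩ := Submodule.mem_span_pair.1 hx
    obtain ⟨py, qy, hy⟩ := Submodule.mem_span_pair.1 hy
    rw [← hx, ← hy]
    simp [lie_add, add_lie, lie_smul, smul_lie, hbr, ← lie_skew (e 2) (e 1)]
  -- f (e 0) ≠ 0
  have hfe0 : f (e 0) ≠ 0 := by
    obtain ⟨u, hu⟩ := hnu
    have hfu : f u ≠ 0 := by rwa [hfapp]
    intro h0
    apply hfu
    have hrep := e.sum_repr u
    calc f u = f (∑ i : Fin 3, e.repr u i • e i) := by rw [hrep]
    _ = ∑ i : Fin 3, e.repr u i • f (e i) := by rw [map_sum]; simp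
    _ = 0 := by rw [Fin.sum_univ_three, h0, hfe1, hfe2]; simp
  -- trace of ad e0
  have htr0 : f (e 0) = a22 + a33 := by
    rw [trace_ad, Fin.sum_univ_three, lie_self, hb1, hb2]
    simp [Finsupp.single_apply]
  have hTne : a22 + a33 ≠ 0 := htr0 ▸ hfe0
  -- membership in I0 iff f vanishes
  have hmemI0 : ∀ z : L, z ∈ I0 ↔ f z = 0 := by
    intro z; rw [hI0]; exact LinearMap.mem_ker
  -- finrank
  have hrank : Module.finrank K I0 = 2 := by
    have hsur : LinearMap.range f = ⊤ := by
      rw [LinearMap.range_eq_top]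
      intro c
      exact ⟨(c / f (e 0)) • e 0, by rw [_root_.map_smul, smul_eq_mul, div_mul_cancel₀ _ hfe0]⟩
    have := LinearMap.finrank_range_add_finrank_ker f
    rw [hsur, hdim, finrank_top, Module.finrank_self] at this
    rw [hI0]
    omega
  -- proportionality
  have hprop : ∀ u v : L, u ∉ I0 → v ∉ I0 →
      ∃ s : K, s ≠ 0 ∧ ∀ x ∈ I0, ⁅v, x⁆ = s • ⁅u, x⁆ := by
    intro u v hu hv
    rw [hmemI0] at hu hv
    refine ⟨f v / f u, div_ne_zero hv hu, ?_⟩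
    intro x hx
    have hz : v - (f v / f u) • u ∈ I0 := by
      rw [hmemI0, map_sub, LinearMap.map_smul, smul_eq_mul]
      field_simp
      ring
    have := habel (v - (f v / f u) • u) hz x hx
    rw [sub_lie, smul_lie, sub_eq_zero] at this
    exact this
  -- generic-set characterization
  have hgen : ∀ b2 b3 : K, ∀ x : Fin 3 → K, x ∈ genSet w (w1 b2 b3) ↔
      (b2 * a32 - b3 * a22) * x 1 + (b2 * a33 - b3 * a23) * x 2 ≠ 0 :=
    fun b2 b3 x => gen_iff a22 a23 a32 a33 b2 b3 w (w1 b2 b3) hw (hw1 b2 b3) x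
  -- the flatness criterion (last conjunct)
  have hlast : ∀ b2 b3 : K, (∀ p ∈ genSet w (w1 b2 b3), flatAt w (w1 b2 b3) p)
      ↔ a32 * b2 ^ 2 + (a33 - a22) * b2 * b3 - a23 * b3 ^ 2 = 0 := by
    intro b2 b3
    constructor
    · intro hall
      by_cases hex : ∃ x : Fin 3 → K,
          (b2 * a32 - b3 * a22) * x 1 + (b2 * a33 - b3 * a23) * x 2 ≠ 0
      · obtain ⟨x, hx⟩ := hex
        exact Q_of_flat a22 a23 a32 a33 b2 b3 w (w1 b2 b3) hw (hw1 b2 b3) hTne x hx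
          (hall x ((hgen b2 b3 x).2 hx))
      · push_neg at hex
        have h1 := hex ![0, 1, 0]
        have h2 := hex ![0, 0, 1]
        simp at h1 h2
        linear_combination b2 * h1 + b3 * h2
    · intro hQ p hp
      exact flat_of_Q a22 a23 a32 a33 b2 b3 w (w1 b2 b3) hw (hw1 b2 b3) hQ p
        ((hgen b2 b3 p).1 hp)
  refine ⟨hideal, hrank, habel, hprop, ?_, hlast⟩
  constructor
  · rintro ⟨b2, b3, _, p, hpgen, hnf⟩ ⟨h23, h32, heq⟩
    exact hnf (flat_of_Q a22 a23 a32 a33 b2 b3 w (w1 b2 b3) hw (hw1 b2 b3)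
      (by rw [h23, h32, heq]; ring) p ((hgen b2 b3 p).1 hpgen))
  · intro hns
    -- choose b2 b3 with Q ≠ 0
    obtain ⟨b2, b3, hQne⟩ : ∃ b2 b3 : K,
        a32 * b2 ^ 2 + (a33 - a22) * b2 * b3 - a23 * b3 ^ 2 ≠ 0 := by
      by_cases h32 : a32 = 0
      · by_cases h23 : a23 = 0
        · refine ⟨1, 1, ?_⟩
          have hne : a22 ≠ a33 := fun h => hns ⟨h23, h32, h⟩
          rw [h32, h23]
          simpa [sub_eq_zero] using fun h => hne h.symm
        · exact ⟨0, 1, by simpa using h23⟩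
      · exact ⟨1, 0, by simpa using h32⟩
    have hab : ¬((b2 * a32 - b3 * a22) = 0 ∧ (b2 * a33 - b3 * a23) = 0) := by
      rintro ⟨h1, h2⟩
      exact hQne (by linear_combination b2 * h1 + b3 * h2)
    obtain ⟨x, hx⟩ := exists_pt _ _ hab
    have hxgen : x ∈ genSet w (w1 b2 b3) := (hgen b2 b3 x).2 hx
    refine ⟨b2, b3, ⟨x, hxgen⟩, x, hxgen, ?_⟩
    intro hf
    exact hQne (Q_of_flat a22 a23 a32 a33 b2 b3 w (w1 b2 b3) hw (hw1 b2 b3) hTne x hx hf)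
end

section
/- Let 𝒜 be a 3-dimensional vector space with two compatible Lie brackets [·,·] and [·,·]_1, both non-unimodular, with 2-dimensional unimodular ideals I and I_1 respectively. If the associated Lie–Poisson pair (Λ,Λ_1) on 𝒜* is non-flat, then I = I_1; i.e. if I ≠ I_1 then the pair (Λ,Λ_1) is flat. -/
open Matrix

variable {K : Type*} [RCLike K]

/-- The coefficient vector of the `(m-2)`-form (here 1-form) representing the
Lie–Poisson structure of the bracket `B` on the dual space `K³`, with respect to the
standard volume form: `w(x)ᵢ = x·B(e_{i+1}, e_{i+2})` (indices mod 3), so that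
`(α×β)·w(x) = x·B(α,β)`. -/
noncomputable def lpVec (B : (Fin 3 → K) →ₗ[K] (Fin 3 → K) →ₗ[K] (Fin 3 → K))
    (x : Fin 3 → K) : Fin 3 → K :=
  fun i => x ⬝ᵥ (B (Pi.single (i + 1) (1 : K)) (Pi.single (i + 2) (1 : K)))

-- ============ auxiliary ============

noncomputable def dotCLM (u : Fin 3 → K) : (Fin 3 → K) →L[K] K :=
  LinearMap.toContinuousLinearMap
    (LinearMap.mk ⟨fun y : Fin 3 → K => y ⬝ᵥ u, fun a b => add_dotProduct a b u⟩
      (fun c a => smul_dotProduct c a u))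

@[simp] lemma dotCLM_apply (u y : Fin 3 → K) : dotCLM u y = y ⬝ᵥ u := rfl

lemma pd_dot (u : Fin 3 → K) (i : Fin 3) (x : Fin 3 → K) :
    pd3 i (fun y : Fin 3 → K => y ⬝ᵥ u) x = u i := by
  have h : (fun y : Fin 3 → K => y ⬝ᵥ u) = dotCLM u := rfl
  rw [pd3, h, ContinuousLinearMap.fderiv, dotCLM_apply, single_dotProduct, one_mul]

noncomputable def cvec (P : (Fin 3 → K) →ₗ[K] (Fin 3 → K) →ₗ[K] (Fin 3 → K)) : Fin 3 → K :=
  ![P (Pi.single 0 1) (Pi.single 1 1) 1 - P (Pi.single 2 1) (Pi.single 0 1) 2,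
    P (Pi.single 1 1) (Pi.single 2 1) 2 - P (Pi.single 0 1) (Pi.single 1 1) 0,
    P (Pi.single 2 1) (Pi.single 0 1) 0 - P (Pi.single 1 1) (Pi.single 2 1) 1]

lemma curl_lpVec (Q : (Fin 3 → K) →ₗ[K] (Fin 3 → K) →ₗ[K] (Fin 3 → K)) (x : Fin 3 → K) :
    curl3 (lpVec Q) x = cvec Q := by
  have h : ∀ (j i : Fin 3), pd3 i (fun y => lpVec Q y j) x
      = Q (Pi.single (j+1) 1) (Pi.single (j+2) 1) i := fun j i => pd_dot _ i x
  funext k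
  fin_cases k <;> simp only [curl3, cvec, h] <;> rfl

lemma skew (P : (Fin 3 → K) →ₗ[K] (Fin 3 → K) →ₗ[K] (Fin 3 → K)) (hP : ∀ x, P x x = 0)
    (a b : Fin 3 → K) : P a b = - P b a := by
  have h := hP (a + b)
  simp only [map_add, LinearMap.add_apply, hP a, hP b, zero_add, add_zero] at h
  exact eq_neg_of_add_eq_zero_right h

lemma expand3 (Q : (Fin 3 → K) →ₗ[K] (Fin 3 → K) →ₗ[K] (Fin 3 → K)) (v y : Fin 3 → K) :
    Q v y = v 0 • Q (Pi.single 0 1) y + v 1 • Q (Pi.single 1 1) y + v 2 • Q (Pi.single 2 1) y := by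
  have hv : v = v 0 • (Pi.single 0 1 : Fin 3 → K) + v 1 • (Pi.single 1 1 : Fin 3 → K)
      + v 2 • (Pi.single 2 1 : Fin 3 → K) := by
    funext j; fin_cases j <;> simp [Pi.single_apply]
  conv_lhs => rw [hv]
  simp [map_add, _root_.map_smul, LinearMap.add_apply, LinearMap.smul_apply]

lemma bigL (P Q : (Fin 3 → K) →ₗ[K] (Fin 3 → K) →ₗ[K] (Fin 3 → K))
    (hP : ∀ x, P x x = 0) (hQ : ∀ x, Q x x = 0) (x : Fin 3 → K) :
    cvec P ⬝ᵥ lpVec Q x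
      = x ⬝ᵥ (Q (P (Pi.single 0 1) (Pi.single 1 1)) (Pi.single 2 1)
          + Q (P (Pi.single 1 1) (Pi.single 2 1)) (Pi.single 0 1)
          + Q (P (Pi.single 2 1) (Pi.single 0 1)) (Pi.single 1 1)) := by
  rw [expand3 Q (P (Pi.single 0 1) (Pi.single 1 1)) (Pi.single 2 1),
      expand3 Q (P (Pi.single 1 1) (Pi.single 2 1)) (Pi.single 0 1),
      expand3 Q (P (Pi.single 2 1) (Pi.single 0 1)) (Pi.single 1 1)]
  have s10 : Q (Pi.single 1 1) (Pi.single 0 1) = - Q (Pi.single 0 1) (Pi.single 1 1) :=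
    skew Q hQ _ _
  have s20 : Q (Pi.single 2 1) (Pi.single 0 1) = - Q (Pi.single 0 1) (Pi.single 2 1) :=
    skew Q hQ _ _
  have s21 : Q (Pi.single 2 1) (Pi.single 1 1) = - Q (Pi.single 1 1) (Pi.single 2 1) :=
    skew Q hQ _ _
  simp only [dotProduct, Fin.sum_univ_three, lpVec, cvec, s10, s20, s21, hQ,
    Pi.add_apply, Pi.smul_apply, Pi.neg_apply, Pi.zero_apply, smul_eq_mul,
    Matrix.cons_val_zero, Matrix.cons_val_one, Matrix.head_cons, Matrix.cons_val_two,
    Matrix.tail_cons, show ((0:Fin 3)+1) = 1 from rfl, show ((0:Fin 3)+2) = 2 from rfl,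
    show ((1:Fin 3)+1) = 2 from rfl, show ((1:Fin 3)+2) = 0 from rfl,
    show ((2:Fin 3)+1) = 0 from rfl, show ((2:Fin 3)+2) = 1 from rfl]
  ring

lemma trace_three (f : (Fin 3 → K) →ₗ[K] (Fin 3 → K)) :
    LinearMap.trace K (Fin 3 → K) f
      = f (Pi.single 0 1) 0 + f (Pi.single 1 1) 1 + f (Pi.single 2 1) 2 := by
  rw [LinearMap.trace_eq_matrix_trace K (Pi.basisFun K (Fin 3)) f, Matrix.trace]
  simp [Matrix.diag, LinearMap.toMatrix_apply, Fin.sum_univ_three]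

lemma trace_eq_dot (P : (Fin 3 → K) →ₗ[K] (Fin 3 → K) →ₗ[K] (Fin 3 → K))
    (hP : ∀ x, P x x = 0) (y : Fin 3 → K) :
    LinearMap.trace K (Fin 3 → K) (P y) = cvec P ⬝ᵥ y := by
  rw [trace_three]
  have hy : ∀ z : Fin 3 → K, P y z
      = y 0 • P (Pi.single 0 1) z + y 1 • P (Pi.single 1 1) z + y 2 • P (Pi.single 2 1) z := by
    intro z
    have hv : y = y 0 • (Pi.single 0 1 : Fin 3 → K) + y 1 • (Pi.single 1 1 : Fin 3 → K)
        + y 2 • (Pi.single 2 1 : Fin 3 → K) := by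
      funext j; fin_cases j <;> simp [Pi.single_apply]
    conv_lhs => rw [hv]
    simp [map_add, _root_.map_smul, LinearMap.add_apply, LinearMap.smul_apply]
  have s10 : P (Pi.single 1 1) (Pi.single 0 1) = - P (Pi.single 0 1) (Pi.single 1 1) :=
    skew P hP _ _
  have s20 : P (Pi.single 2 1) (Pi.single 0 1) = - P (Pi.single 0 1) (Pi.single 2 1) :=
    skew P hP _ _
  have s21 : P (Pi.single 2 1) (Pi.single 1 1) = - P (Pi.single 1 1) (Pi.single 2 1) :=
    skew P hP _ _
  simp only [hy, dotProduct, Fin.sum_univ_three, cvec, s10, s20, s21, hP,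
    Pi.add_apply, Pi.smul_apply, Pi.neg_apply, Pi.zero_apply, smul_eq_mul,
    Matrix.cons_val_zero, Matrix.cons_val_one, Matrix.head_cons, Matrix.cons_val_two,
    Matrix.tail_cons]
  ring

lemma trace_bracket (P : (Fin 3 → K) →ₗ[K] (Fin 3 → K) →ₗ[K] (Fin 3 → K))
    (hP : ∀ x, P x x = 0)
    (hj : ∀ x y z, P (P x y) z + P (P y z) x + P (P z x) y = 0) (a b : Fin 3 → K) :
    LinearMap.trace K (Fin 3 → K) (P (P a b)) = 0 := by
  have hcomm : P (P a b) = P a ∘ₗ P b - P b ∘ₗ P a := by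
    apply LinearMap.ext; intro z
    have h := hj a b z
    have h1 : P (P b z) a = - P a (P b z) := skew P hP _ _
    have h2 : P (P z a) b = P b (P a z) := by
      rw [skew P hP z a, map_neg, LinearMap.neg_apply, skew P hP (P a z) b]; ring_nf
    rw [h1, h2] at h
    have h3 : P (P a b) z + (P b (P a z) - P a (P b z)) = 0 := by rw [← h]; abel
    have h4 := eq_neg_of_add_eq_zero_left h3
    rw [h4, LinearMap.sub_apply, LinearMap.comp_apply, LinearMap.comp_apply]; abel
  rw [hcomm, map_sub, show P a ∘ₗ P b = P a * P b from rfl,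
    show P b ∘ₗ P a = P b * P a from rfl, LinearMap.trace_mul_comm, sub_self]

lemma bac_cab (a b c : Fin 3 → K) :
    a ⨯₃ (b ⨯₃ c) = (a ⬝ᵥ c) • b - (a ⬝ᵥ b) • c := by
  funext i
  fin_cases i <;>
    simp [cross_apply, dotProduct, Fin.sum_univ_three, Pi.smul_apply, smul_eq_mul] <;> ring

lemma cross_zero_dep (a b : Fin 3 → K) (ha : a ≠ 0) (h : a ⨯₃ b = 0) : ∃ r : K, b = r • a := by
  obtain ⟨i, hi⟩ : ∃ i, a i ≠ 0 := by
    by_contra hc; push_neg at hc; exact ha (funext hc)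
  have h0 := congrFun h 0
  have h1 := congrFun h 1
  have h2 := congrFun h 2
  simp only [cross_apply, Matrix.cons_val_zero, Matrix.cons_val_one, Matrix.head_cons,
    Matrix.cons_val_two, Matrix.tail_cons, Pi.zero_apply, sub_eq_zero] at h0 h1 h2
  refine ⟨b i / a i, ?_⟩
  funext j
  rw [Pi.smul_apply, smul_eq_mul, div_mul_eq_mul_div, eq_div_iff hi, mul_comm (b i) (a j)]
  have h3 : ∀ t : Fin 3, t = 0 ∨ t = 1 ∨ t = 2 := by decide
  rcases h3 i with rfl | rfl | rfl <;> rcases h3 j with rfl | rfl | rfl <;>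
    first
      | ring1
      | linear_combination h0
      | linear_combination h1
      | linear_combination h2
      | linear_combination -h0
      | linear_combination -h1
      | linear_combination -h2

lemma pd_inv_mul (u : Fin 3 → K) (cst : K) (i : Fin 3) (x : Fin 3 → K) (hx : x ⬝ᵥ u ≠ 0) :
    pd3 i (fun y : Fin 3 → K => (y ⬝ᵥ u)⁻¹ * cst) x = -((x ⬝ᵥ u) ^ 2)⁻¹ * u i * cst := by
  have hg : HasFDerivAt (fun y : Fin 3 → K => y ⬝ᵥ u) (dotCLM u) x :=
    (dotCLM u).hasFDerivAt
  have hinv : HasFDerivAt (fun y : Fin 3 → K => (y ⬝ᵥ u)⁻¹)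
      ((ContinuousLinearMap.smulRight (1 : K →L[K] K) (-((x ⬝ᵥ u) ^ 2)⁻¹)).comp (dotCLM u)) x :=
    (hasFDerivAt_inv hx).comp x hg
  have hmul := hinv.mul_const cst
  rw [pd3, hmul.fderiv]
  simp [single_dotProduct]
  ring

/-- let `𝒜 = K³` carry two compatible Lie brackets `B, B₁`, both
non-unimodular, with 2-dimensional unimodular ideals `I, I₁`. If `I ≠ I₁` then the
associated Lie–Poisson pair `(Λ, Λ₁)` on `𝒜*` is flat (at every generic point); i.e. a
non-flat pair forces `I = I₁`. -/
theorem stmt_19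
    (B B1 : (Fin 3 → K) →ₗ[K] (Fin 3 → K) →ₗ[K] (Fin 3 → K))
    (hBalt : ∀ x, B x x = 0)
    (hBjac : ∀ x y z, B (B x y) z + B (B y z) x + B (B z x) y = 0)
    (hB1alt : ∀ x, B1 x x = 0)
    (hB1jac : ∀ x y z, B1 (B1 x y) z + B1 (B1 y z) x + B1 (B1 z x) y = 0)
    (hcompat : ∀ x y z, (B + B1) ((B + B1) x y) z + (B + B1) ((B + B1) y z) x
      + (B + B1) ((B + B1) z x) y = 0)
    (hnu : ∃ x, LinearMap.trace K (Fin 3 → K) (B x) ≠ 0)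
    (hnu1 : ∃ x, LinearMap.trace K (Fin 3 → K) (B1 x) ≠ 0)
    (I I1 : Submodule K (Fin 3 → K))
    (hI : I = LinearMap.ker ((LinearMap.trace K (Fin 3 → K)).comp B))
    (hI1 : I1 = LinearMap.ker ((LinearMap.trace K (Fin 3 → K)).comp B1))
    (hdI : Module.finrank K I = 2) (hdI1 : Module.finrank K I1 = 2)
    (hne : I ≠ I1) :
    ∀ p ∈ genSet (lpVec B) (lpVec B1), flatAt (lpVec B) (lpVec B1) p := by
  intro p hp
  set s0 : Fin 3 → K := Pi.single 0 1 with hs0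
  set s1 : Fin 3 → K := Pi.single 1 1 with hs1
  set s2 : Fin 3 → K := Pi.single 2 1 with hs2
  set c : Fin 3 → K := cvec B with hcdef
  set c1 : Fin 3 → K := cvec B1 with hc1def
  have htrB : ∀ y, LinearMap.trace K (Fin 3 → K) (B y) = c ⬝ᵥ y := trace_eq_dot B hBalt
  have htrB1 : ∀ y, LinearMap.trace K (Fin 3 → K) (B1 y) = c1 ⬝ᵥ y := trace_eq_dot B1 hB1alt
  -- nonvanishing of modular covectors
  have hcne : c ≠ 0 := by
    obtain ⟨x, hx⟩ := hnu
    intro h0; exact hx (by rw [htrB, h0, zero_dotProduct])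
  have hc1ne : c1 ≠ 0 := by
    obtain ⟨x, hx⟩ := hnu1
    intro h0; exact hx (by rw [htrB1, h0, zero_dotProduct])
  -- v ≠ 0 since I ≠ I1
  have hv : c ⨯₃ c1 ≠ 0 := by
    intro hcc
    obtain ⟨r, hr⟩ := cross_zero_dep c c1 hcne hcc
    have hrne : r ≠ 0 := by rintro rfl; rw [zero_smul] at hr; exact hc1ne hr
    apply hne
    rw [hI, hI1]
    ext x
    simp only [LinearMap.mem_ker, LinearMap.comp_apply, htrB, htrB1, hr, smul_dotProduct,
      smul_eq_mul]
    constructor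
    · intro h; rw [h, mul_zero]
    · intro h; exact (mul_eq_zero.mp h).resolve_left hrne
  set v : Fin 3 → K := c ⨯₃ c1 with hvdef
  -- Jacobi sums vanish
  have JB : B (B s0 s1) s2 + B (B s1 s2) s0 + B (B s2 s0) s1 = 0 := hBjac s0 s1 s2
  have JB1 : B1 (B1 s0 s1) s2 + B1 (B1 s1 s2) s0 + B1 (B1 s2 s0) s1 = 0 := hB1jac s0 s1 s2
  set u : Fin 3 → K := B1 (B s0 s1) s2 + B1 (B s1 s2) s0 + B1 (B s2 s0) s1 with hudef
  set u' : Fin 3 → K := B (B1 s0 s1) s2 + B (B1 s1 s2) s0 + B (B1 s2 s0) s1 with hu'def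
  have hu' : u' = -u := by
    have h12 := hcompat s0 s1 s2
    simp only [LinearMap.add_apply, map_add] at h12
    funext i
    have h12i := congrFun h12 i
    have e1i := congrFun JB i
    have e2i := congrFun JB1 i
    simp only [hudef, hu'def, Pi.add_apply, Pi.neg_apply, Pi.zero_apply] at h12i e1i e2i ⊢
    linear_combination h12i - e1i - e2i
  -- dot product identities with the 1-forms
  have hcw : ∀ x, c ⬝ᵥ lpVec B x = 0 := by
    intro x; rw [hcdef, bigL B B hBalt hBalt x, JB, dotProduct_zero]
  have hc1w1 : ∀ x, c1 ⬝ᵥ lpVec B1 x = 0 := by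
    intro x; rw [hc1def, bigL B1 B1 hB1alt hB1alt x, JB1, dotProduct_zero]
  have hcw1 : ∀ x, c ⬝ᵥ lpVec B1 x = x ⬝ᵥ u := by
    intro x; rw [hcdef, bigL B B1 hBalt hB1alt x, hudef]
  have hc1w : ∀ x, c1 ⬝ᵥ lpVec B x = -(x ⬝ᵥ u) := by
    intro x; rw [hc1def, bigL B1 B hB1alt hBalt x, ← hu'def, hu', dotProduct_neg]
  -- u is orthogonal to c and c1
  have haltS : ∀ x, (B + B1) x x = 0 := by
    intro x; simp only [LinearMap.add_apply, Pi.add_apply, hBalt, hB1alt, add_zero]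
  have htrS := trace_bracket (B + B1) haltS hcompat
  have htrBr := trace_bracket B hBalt hBjac
  have htrB1r := trace_bracket B1 hB1alt hB1jac
  have hmixtr : ∀ a b, c ⬝ᵥ B1 a b = -(c1 ⬝ᵥ B a b) := by
    intro a b
    have h := htrS a b
    simp only [LinearMap.add_apply, map_add] at h
    have hb : LinearMap.trace K (Fin 3 → K) (B (B a b)) = 0 := htrBr a b
    have hb1 : LinearMap.trace K (Fin 3 → K) (B1 (B1 a b)) = 0 := htrB1r a b
    rw [htrB, htrB, htrB1, htrB1] at h
    rw [htrB] at hb; rw [htrB1] at hb1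
    linear_combination h - hb - hb1
  have hcu : c ⬝ᵥ u = 0 := by
    rw [hudef, dotProduct_add, dotProduct_add, hmixtr, hmixtr, hmixtr]
    have : c1 ⬝ᵥ B (B s0 s1) s2 + c1 ⬝ᵥ B (B s1 s2) s0 + c1 ⬝ᵥ B (B s2 s0) s1
        = c1 ⬝ᵥ (B (B s0 s1) s2 + B (B s1 s2) s0 + B (B s2 s0) s1) := by
      rw [dotProduct_add, dotProduct_add]
    rw [show -(c1 ⬝ᵥ B (B s0 s1) s2) + -(c1 ⬝ᵥ B (B s1 s2) s0) + -(c1 ⬝ᵥ B (B s2 s0) s1)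
        = -(c1 ⬝ᵥ B (B s0 s1) s2 + c1 ⬝ᵥ B (B s1 s2) s0 + c1 ⬝ᵥ B (B s2 s0) s1) from by ring,
      this, JB, dotProduct_zero, neg_zero]
  have hc1u : c1 ⬝ᵥ u = 0 := by
    rw [hudef, dotProduct_add, dotProduct_add, ← htrB1, ← htrB1, ← htrB1,
      htrB1r, htrB1r, htrB1r, add_zero, add_zero]
  -- u × v = 0
  have huv : u ⨯₃ v = 0 := by
    rw [hvdef, bac_cab, dotProduct_comm u c1, dotProduct_comm u c, hcu, hc1u,
      zero_smul, zero_smul, sub_zero]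
  -- genericity forces p ⬝ᵥ u ≠ 0
  have hgp : p ⬝ᵥ u ≠ 0 := by
    intro h0
    have hwp1 : lpVec B p ⬝ᵥ c = 0 := by rw [dotProduct_comm]; exact hcw p
    have hwp2 : lpVec B p ⬝ᵥ c1 = 0 := by rw [dotProduct_comm, hc1w, h0, neg_zero]
    have hw1p1 : lpVec B1 p ⬝ᵥ c = 0 := by rw [dotProduct_comm, hcw1, h0]
    have hw1p2 : lpVec B1 p ⬝ᵥ c1 = 0 := by rw [dotProduct_comm]; exact hc1w1 p
    have hx1 : v ⨯₃ lpVec B p = 0 := by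
      rw [← cross_anticomm, hvdef, bac_cab, hwp1, hwp2, zero_smul, zero_smul, sub_zero, neg_zero]
    have hx2 : v ⨯₃ lpVec B1 p = 0 := by
      rw [← cross_anticomm, hvdef, bac_cab, hw1p1, hw1p2, zero_smul, zero_smul, sub_zero,
        neg_zero]
    obtain ⟨s, hs⟩ := cross_zero_dep v (lpVec B p) hv hx1
    obtain ⟨t, ht⟩ := cross_zero_dep v (lpVec B1 p) hv hx2
    by_cases hst : s = 0 ∧ t = 0
    · exact hp 1 0 (by simp) (by simp [hs, ht, hst.1, hst.2])
    · refine hp t (-s) ?_ ?_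
      · rintro ⟨h1, h2⟩; exact hst ⟨by rw [← neg_neg s, h2, neg_zero], h1⟩
      · rw [hs, ht, smul_smul, smul_smul]
        rw [show t * s = s * t from mul_comm t s, ← add_smul]
        simp
  -- the construction
  refine ⟨{x | x ⬝ᵥ u ≠ 0}, ?_, hgp, fun x => (x ⬝ᵥ u)⁻¹ • v, ?_, ?_⟩
  · have : {x : Fin 3 → K | x ⬝ᵥ u ≠ 0} = (fun x : Fin 3 → K => x ⬝ᵥ u) ⁻¹' ({0}ᶜ) := by
      ext x; simp [Set.mem_preimage]
    rw [this]
    exact IsOpen.preimage (by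
      have : (fun x : Fin 3 → K => x ⬝ᵥ u) = dotCLM u := rfl
      rw [this]; exact (dotCLM u).continuous) isOpen_compl_singleton
  · intro x hx
    have hdx : DifferentiableAt K (fun y : Fin 3 → K => y ⬝ᵥ u) x := by
      have : (fun y : Fin 3 → K => y ⬝ᵥ u) = dotCLM u := rfl
      rw [this]; exact (dotCLM u).differentiableAt
    exact ((hdx.inv hx).smul (differentiableAt_const v)).differentiableWithinAt
  · intro x hxmem
    have hx : x ⬝ᵥ u ≠ 0 := hxmem
    have hsm : ∀ w : Fin 3 → K, crossProduct ((x ⬝ᵥ u)⁻¹ • v) w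
        = (x ⬝ᵥ u)⁻¹ • crossProduct v w := by
      intro w; rw [_root_.map_smul]; rfl
    refine ⟨?_, ?_, ?_⟩
    · rw [curl_lpVec B x, ← hcdef, hsm, ← cross_anticomm, hvdef, bac_cab,
        dotProduct_comm (lpVec B x) c1, dotProduct_comm (lpVec B x) c, hcw, hc1w]
      simp only [zero_smul, sub_zero, zero_sub, smul_neg, neg_smul, neg_neg, smul_smul,
        inv_mul_cancel₀ hx, one_smul]
    · rw [curl_lpVec B1 x, ← hc1def, hsm, ← cross_anticomm, hvdef, bac_cab,
        dotProduct_comm (lpVec B1 x) c1, dotProduct_comm (lpVec B1 x) c, hc1w1, hcw1]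
      simp only [zero_smul, sub_zero, zero_sub, smul_neg, neg_smul, neg_neg, smul_smul,
        inv_mul_cancel₀ hx, one_smul]
    · have hlam : ∀ i j, pd3 i (fun y : Fin 3 → K => ((y ⬝ᵥ u)⁻¹ • v) j) x
          = -((x ⬝ᵥ u) ^ 2)⁻¹ * u i * v j := fun i j => pd_inv_mul u (v j) i x hx
      have hu0 := congrFun huv 0
      have hu1 := congrFun huv 1
      have hu2 := congrFun huv 2
      simp only [cross_apply, Matrix.cons_val_zero, Matrix.cons_val_one, Matrix.head_cons,
        Matrix.cons_val_two, Matrix.tail_cons, Pi.zero_apply] at hu0 hu1 hu2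
      funext k
      have h3 : ∀ t : Fin 3, t = 0 ∨ t = 1 ∨ t = 2 := by decide
      rcases h3 k with rfl | rfl | rfl <;>
        simp only [curl3, hlam, Matrix.cons_val_zero, Matrix.cons_val_one, Matrix.head_cons,
          Matrix.cons_val_two, Matrix.tail_cons, Pi.zero_apply] <;>
        first
          | linear_combination (-((x ⬝ᵥ u) ^ 2)⁻¹) * hu0
          | linear_combination (-((x ⬝ᵥ u) ^ 2)⁻¹) * hu1
          | linear_combination (-((x ⬝ᵥ u) ^ 2)⁻¹) * hu2
end
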